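/- Let X be a real Hilbert space, w ∈ X with w ≠ 0, l > 0, and define θ : X → ℝ by θ(v) = 2l − (w, v)_X; set K = {v ∈ X : θ(v) ≥ 0} and K' = {v ∈ X : θ(v) ≥ 2l}. Let A : X → X satisfy (Au − Av, u − v)_X ≥ m‖u − v‖_X² and ‖Au − Av‖_X ≤ M‖u − v‖_X for all u, v ∈ X, with m, M > 0. Let p : ℝ → ℝ be Lipschitz with constant L_p > 0 and assume m > L_p‖w‖_X²; define j(u, v) = −p(θ(u)) θ(v). Let q : ℝ → ℝ be Lipschitz continuous, satisfy (q(r₁) − q(r₂))(r₁ − r₂) ≤ 0 for all r₁, r₂ ∈ ℝ, q(r) ≥ 0 for r ≤ 2l, q(r) ≤ 0 for r ≥ 2l, and q(r) = 0 if and only if r ≥ 2l; define G : X → X by Gu = q(θ(u)) w. Let f ∈ X and let {λ_n} be positive reals with λ_n → 0. Then for each n there exists a unique u_n ∈ K with (Au_n, v − u_n)_X + (1/λ_n)(Gu_n, v − u_n)_X + j(u_n, v) − j(u_n, u_n) ≥ (f, v − u_n)_X for all v ∈ K, there exists a unique u' ∈ K' with (Au', v − u')_X + j(u', v) − j(u',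 u') ≥ (f, v − u')_X for all v ∈ K', and u_n → u' strongly in X as n → ∞. -/

import Mathlib

open scoped InnerProductSpace
open Filter

section Aux
variable {X : Type*} [NormedAddCommGroup X] [InnerProductSpace ℝ X] [CompleteSpace X]

/-- Projection onto a nonempty closed convex set: existence of a point with the
variational characterization. -/
lemma exists_proj (S : Set X) (hconv : Convex ℝ S) (hcl : IsClosed S) (hne : S.Nonempty)
    (x : X) : ∃ z ∈ S, ∀ v ∈ S, ⟪x - z, v - z⟫_ℝ ≤ 0 := by
  obtain ⟨z, hz, hmin⟩ := exists_norm_eq_iInf_of_complete_convex hne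
    (hcl.isComplete) hconv x
  exact ⟨z, hz, (norm_eq_iInf_iff_real_inner_le_zero hconv hz).1 hmin⟩

/-- Lions–Stampacchia: existence and uniqueness of the solution of a variational
inequality for a Lipschitz strongly monotone operator on a nonempty closed convex set. -/
lemma lions_stampacchia (S : Set X) (hconv : Convex ℝ S) (hcl : IsClosed S)
    (hne : S.Nonempty) (B : X → X) (m' M' : ℝ) (hm' : 0 < m')
    (hmono : ∀ u v : X, m' * ‖u - v‖ ^ 2 ≤ ⟪B u - B v, u - v⟫_ℝ)
    (hlip : ∀ u v : X, ‖B u - B v‖ ≤ M' * ‖u - v‖) (f : X) :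
    ∃! u : X, u ∈ S ∧ ∀ v ∈ S, ⟪f, v - u⟫_ℝ ≤ ⟪B u, v - u⟫_ℝ := by
  -- replace M' by max M' m' so that 0 < m' ≤ M₀
  set M₀ : ℝ := max M' m' with hM₀
  have hM₀pos : 0 < M₀ := lt_of_lt_of_le hm' (le_max_right _ _)
  have hm'M₀ : m' ≤ M₀ := le_max_right _ _
  have hlip₀ : ∀ u v : X, ‖B u - B v‖ ≤ M₀ * ‖u - v‖ := fun u v =>
    (hlip u v).trans (mul_le_mul_of_nonneg_right (le_max_left _ _) (norm_nonneg _))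
  set ρ : ℝ := m' / M₀ ^ 2 with hρ
  have hρpos : 0 < ρ := div_pos hm' (by positivity)
  set k : ℝ := Real.sqrt (1 - (m' / M₀) ^ 2) with hk
  have hratio : 0 < m' / M₀ := div_pos hm' hM₀pos
  have hratio1 : m' / M₀ ≤ 1 := (div_le_one hM₀pos).2 hm'M₀
  have hk2 : k ^ 2 = 1 - (m' / M₀) ^ 2 := Real.sq_sqrt (by nlinarith)
  have hknn : 0 ≤ k := Real.sqrt_nonneg _
  have hklt : k < 1 := by
    rw [hk]
    have : 1 - (m' / M₀) ^ 2 < 1 := by nlinarith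
    calc Real.sqrt (1 - (m' / M₀) ^ 2) < Real.sqrt 1 := by
          apply Real.sqrt_lt_sqrt ?_ this
          nlinarith
      _ = 1 := Real.sqrt_one
  -- key contraction estimate
  have hcontr : ∀ u v : X, ‖(u - ρ • (B u - f)) - (v - ρ • (B v - f))‖ ≤ k * ‖u - v‖ := by
    intro u v
    have hEq : (u - ρ • (B u - f)) - (v - ρ • (B v - f)) = (u - v) - ρ • (B u - B v) := by
      module
    rw [hEq]
    have hsq : ‖(u - v) - ρ • (B u - B v)‖ ^ 2 ≤ (k * ‖u - v‖) ^ 2 := by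
      have h1 : ‖(u - v) - ρ • (B u - B v)‖ ^ 2
          = ‖u - v‖ ^ 2 - 2 * ρ * ⟪u - v, B u - B v⟫_ℝ + ρ ^ 2 * ‖B u - B v‖ ^ 2 := by
        rw [@norm_sub_sq_real X, real_inner_smul_right, norm_smul]
        rw [Real.norm_eq_abs, abs_of_pos hρpos]
        ring
      have h2 : m' * ‖u - v‖ ^ 2 ≤ ⟪u - v, B u - B v⟫_ℝ := by
        rw [real_inner_comm]; exact hmono u v
      have h3 : ‖B u - B v‖ ^ 2 ≤ (M₀ * ‖u - v‖) ^ 2 := by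
        have := hlip₀ u v
        nlinarith [norm_nonneg (B u - B v)]
      have h4 : (k * ‖u - v‖) ^ 2 = (1 - (m' / M₀) ^ 2) * ‖u - v‖ ^ 2 := by
        rw [mul_pow, hk2]
      rw [h1, h4]
      have hρM : ρ ^ 2 * (M₀ * ‖u - v‖) ^ 2 = (m' / M₀) ^ 2 * ‖u - v‖ ^ 2 := by
        field_simp [hρ]
        rw [hρ, div_pow, div_mul_eq_mul_div, div_mul_eq_mul_div, div_eq_iff (by positivity)]; ring
      have hρm : 2 * ρ * (m' * ‖u - v‖ ^ 2) = 2 * (m' / M₀) ^ 2 * ‖u - v‖ ^ 2 := by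
        field_simp [hρ]
        rw [hρ, div_mul_eq_mul_div, div_mul_eq_mul_div, div_eq_iff (by positivity)]
      nlinarith [sq_nonneg ρ]
    have h5 := Real.sqrt_le_sqrt hsq
    rwa [Real.sqrt_sq (norm_nonneg _), Real.sqrt_sq (by positivity)] at h5
  -- projection onto S
  choose P hPmem hPvar using exists_proj S hconv hcl hne
  have hPnon : ∀ x y : X, ‖P x - P y‖ ≤ ‖x - y‖ := by
    intro x y
    have e1 : ⟪x - P x, P y - P x⟫_ℝ ≤ 0 := hPvar x (P y) (hPmem y)
    have e2 : ⟪y - P y, P x - P y⟫_ℝ ≤ 0 := hPvar y (P x) (hPmem x)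
    have e1' : 0 ≤ ⟪x - P x, P x - P y⟫_ℝ := by
      rw [show P y - P x = -(P x - P y) from by abel, inner_neg_right] at e1
      linarith
    have key : ‖P x - P y‖ ^ 2 ≤ ⟪x - y, P x - P y⟫_ℝ := by
      have hxy : x - y = (x - P x) - (y - P y) + (P x - P y) := by abel
      rw [hxy, inner_add_left, inner_sub_left, real_inner_self_eq_norm_sq]
      linarith
    have cs : ⟪x - y, P x - P y⟫_ℝ ≤ ‖x - y‖ * ‖P x - P y‖ := real_inner_le_norm _ _
    nlinarith [norm_nonneg (P x - P y), norm_nonneg (x - y)]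
  -- Banach fixed point on the subtype S
  haveI : Nonempty S := hne.to_subtype
  haveI : CompleteSpace S := hcl.completeSpace_coe
  set T : S → S := fun x => ⟨P ((x : X) - ρ • (B x - f)), hPmem _⟩ with hT
  have hlipT : LipschitzWith ⟨k, hknn⟩ T := by
    apply LipschitzWith.of_dist_le_mul
    intro x y
    rw [Subtype.dist_eq, Subtype.dist_eq, dist_eq_norm, dist_eq_norm]
    calc ‖(T x : X) - (T y : X)‖
        ≤ ‖((x : X) - ρ • (B x - f)) - ((y : X) - ρ • (B y - f))‖ := hPnon _ _
      _ ≤ k * ‖(x : X) - (y : X)‖ := hcontr _ _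
  have hcw : ContractingWith ⟨k, hknn⟩ T := ⟨by exact_mod_cast hklt, hlipT⟩
  obtain ⟨u, hfix⟩ : ∃ u : S, T u = u := ⟨_, hcw.fixedPoint_isFixedPt⟩
  have hfix' : P ((u : X) - ρ • (B u - f)) = (u : X) := congrArg Subtype.val hfix
  have hsol : ∀ v ∈ S, ⟪f, v - (u : X)⟫_ℝ ≤ ⟪B u, v - (u : X)⟫_ℝ := by
    intro v hv
    have h := hPvar ((u : X) - ρ • (B u - f)) v hv
    rw [hfix'] at h
    have heq : (u : X) - ρ • (B (u : X) - f) - (u : X) = -(ρ • (B (u : X) - f)) := by abel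
    rw [heq, inner_neg_left, real_inner_smul_left, inner_sub_left] at h
    have : 0 ≤ ρ * (⟪B (u : X), v - (u : X)⟫_ℝ - ⟪f, v - (u : X)⟫_ℝ) := by linarith
    nlinarith
  refine ⟨(u : X), ⟨u.2, hsol⟩, ?_⟩
  rintro y ⟨hyS, hysol⟩
  have h1 := hysol (u : X) u.2
  have h2 := hsol y hyS
  have hm := hmono y (u : X)
  clear hfix hlipT hcw hcontr hPvar hPnon hsol hysol hT
  rw [show (u : X) - y = -(y - (u : X)) from by abel, inner_neg_right, inner_neg_right] at h1
  rw [inner_sub_left] at hm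
  have hn : ‖y - (u : X)‖ ^ 2 ≤ 0 := by
    have hsum : ⟪B y - B (u : X), y - (u : X)⟫_ℝ ≤ 0 := by rw [inner_sub_left]; linarith
    have h5 := hmono y (u : X)
    rw [inner_sub_left] at h5
    have h6 : m' * ‖y - (u : X)‖ ^ 2 ≤ m' * 0 := by rw [mul_zero]; linarith
    have h7 := (mul_le_mul_iff_right₀ hm').mp h6
    linarith
  have : y - (u : X) = 0 := by
    have h8 := sq_nonneg ‖y - (u : X)‖
    have hz : ‖y - (u : X)‖ ^ 2 = 0 := le_antisymm hn h8
    have := pow_eq_zero_iff (n := 2) (by norm_num) |>.mp hz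
    exact norm_eq_zero.mp this
  have : y = (u : X) := by
    have h := sub_eq_zero.mp this
    exact h
  exact this
end Aux

set_option maxHeartbeats 1000000 in
theorem spring_rods_convergence_rigid_compression
    {X : Type*} [NormedAddCommGroup X] [InnerProductSpace ℝ X] [CompleteSpace X]
    (w : X) (hw : w ≠ 0) (l : ℝ) (hl : 0 < l)
    (θ : X → ℝ) (hθ : ∀ v : X, θ v = 2 * l - ⟪w, v⟫_ℝ)
    (K K' : Set X)
    (hK : K = {v : X | θ v ≥ 0}) (hK' : K' = {v : X | θ v ≥ 2 * l})
    (A : X → X) (m M : ℝ) (hm : 0 < m) (hM : 0 < M)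
    (hA_mono : ∀ u v : X, m * ‖u - v‖ ^ 2 ≤ ⟪A u - A v, u - v⟫_ℝ)
    (hA_lip : ∀ u v : X, ‖A u - A v‖ ≤ M * ‖u - v‖)
    (p : ℝ → ℝ) (Lp : ℝ) (hLp : 0 < Lp)
    (hp_lip : ∀ r s : ℝ, |p r - p s| ≤ Lp * |r - s|)
    (hsmall : Lp * ‖w‖ ^ 2 < m)
    (j : X → X → ℝ) (hj : ∀ u v : X, j u v = -(p (θ u)) * θ v)
    (q : ℝ → ℝ)
    (hq_lip : ∃ Lq : ℝ, 0 < Lq ∧ ∀ r s : ℝ, |q r - q s| ≤ Lq * |r - s|)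
    (hq_mono : ∀ r s : ℝ, (q r - q s) * (r - s) ≤ 0)
    (hq_nonneg : ∀ r : ℝ, r ≤ 2 * l → 0 ≤ q r)
    (hq_nonpos : ∀ r : ℝ, 2 * l ≤ r → q r ≤ 0)
    (hq_zero : ∀ r : ℝ, q r = 0 ↔ 2 * l ≤ r)
    (G : X → X) (hG : ∀ u : X, G u = q (θ u) • w)
    (f : X) (lam : ℕ → ℝ) (hlam_pos : ∀ n, 0 < lam n)
    (hlam_lim : Tendsto lam atTop (nhds 0)) :
    (∀ n : ℕ, ∃! u : X, u ∈ K ∧ ∀ v ∈ K,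
      ⟪A u, v - u⟫_ℝ + (1 / lam n) * ⟪G u, v - u⟫_ℝ + j u v - j u u
        ≥ ⟪f, v - u⟫_ℝ) ∧
    (∃! u' : X, u' ∈ K' ∧ ∀ v ∈ K',
      ⟪A u', v - u'⟫_ℝ + j u' v - j u' u' ≥ ⟪f, v - u'⟫_ℝ) ∧
    (∀ (un : ℕ → X) (u' : X),
      (∀ n : ℕ, un n ∈ K ∧ ∀ v ∈ K,
        ⟪A (un n), v - un n⟫_ℝ + (1 / lam n) * ⟪G (un n), v - un n⟫_ℝ
          + j (un n) v - j (un n) (un n) ≥ ⟪f, v - un n⟫_ℝ) →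
      (u' ∈ K' ∧ ∀ v ∈ K',
        ⟪A u', v - u'⟫_ℝ + j u' v - j u' u' ≥ ⟪f, v - u'⟫_ℝ) →
      Tendsto un atTop (nhds u')) := by
  obtain ⟨Lq, hLq, hq_lipschitz⟩ := hq_lip
  have hwpos : (0:ℝ) < ‖w‖ := norm_pos_iff.mpr hw
  set m' : ℝ := m - Lp * ‖w‖ ^ 2 with hm'def
  have hm' : 0 < m' := by rw [hm'def]; linarith
  -- the combined operator
  set B : ℝ → X → X := fun c u => A u + (p (θ u) + c * q (θ u)) • w with hB
  have hwinner : ∀ u v : X, ⟪w, v - u⟫_ℝ = θ u - θ v := by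
    intro u v; rw [hθ, hθ, inner_sub_right]; ring
  have hBrw : ∀ (c : ℝ) (u v : X),
      ⟪A u, v - u⟫_ℝ + c * ⟪G u, v - u⟫_ℝ + j u v - j u u = ⟪B c u, v - u⟫_ℝ := by
    intro c u v
    rw [hB]
    simp only [hG, hj]
    rw [inner_add_left, real_inner_smul_left, real_inner_smul_left, hwinner]
    ring
  have hBexp : ∀ (c : ℝ) (u v : X), B c u - B c v
      = (A u - A v) + ((p (θ u) + c * q (θ u)) - (p (θ v) + c * q (θ v))) • w := by
    intro c u v; rw [hB]; simp only; module
  have hθbound : ∀ u v : X, |θ u - θ v| ≤ ‖w‖ * ‖u - v‖ := by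
    intro u v
    have h := hwinner v u  -- ⟪w, u - v⟫ = θ v - θ u
    have h2 := abs_real_inner_le_norm w (u - v)
    rw [h] at h2
    rw [show θ u - θ v = -(θ v - θ u) by ring, abs_neg]
    exact h2
  have hBmono : ∀ c : ℝ, 0 ≤ c → ∀ u v : X,
      m' * ‖u - v‖ ^ 2 ≤ ⟪B c u - B c v, u - v⟫_ℝ := by
    intro c hc u v
    rw [hBexp, inner_add_left, real_inner_smul_left, hwinner v u]
    have hA := hA_mono u v
    have hq' := hq_mono (θ u) (θ v)
    have hp' := hp_lip (θ u) (θ v)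
    have hθb := hθbound u v
    have habs1 : (p (θ u) - p (θ v)) * (θ v - θ u) ≥ -(Lp * (θ u - θ v) ^ 2) := by
      have h1 : |(p (θ u) - p (θ v)) * (θ u - θ v)| ≤ Lp * |θ u - θ v| * |θ u - θ v| := by
        rw [abs_mul]
        exact mul_le_mul_of_nonneg_right hp' (abs_nonneg _)
      have h2 := le_abs_self ((p (θ u) - p (θ v)) * (θ u - θ v))
      have h3 : |θ u - θ v| * |θ u - θ v| = (θ u - θ v) ^ 2 := by
        rw [← abs_mul, ← sq, abs_sq]
      nlinarith
    have habs2 : (θ u - θ v) ^ 2 ≤ ‖w‖ ^ 2 * ‖u - v‖ ^ 2 := by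
      nlinarith [abs_nonneg (θ u - θ v), norm_nonneg w, norm_nonneg (u - v), sq_abs (θ u - θ v)]
    have hqterm : 0 ≤ c * ((q (θ u) - q (θ v)) * (θ v - θ u)) := by nlinarith
    rw [hm'def]
    nlinarith
  have hBlip : ∀ c : ℝ, 0 ≤ c → ∀ u v : X,
      ‖B c u - B c v‖ ≤ (M + (Lp + c * Lq) * ‖w‖ ^ 2) * ‖u - v‖ := by
    intro c hc u v
    rw [hBexp]
    calc ‖(A u - A v) + ((p (θ u) + c * q (θ u)) - (p (θ v) + c * q (θ v))) • w‖
        ≤ ‖A u - A v‖ + ‖((p (θ u) + c * q (θ u)) - (p (θ v) + c * q (θ v))) • w‖ :=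
          norm_add_le _ _
      _ ≤ (M + (Lp + c * Lq) * ‖w‖ ^ 2) * ‖u - v‖ := by
          rw [norm_smul, Real.norm_eq_abs]
          have h1 := hA_lip u v
          have h2 : |(p (θ u) + c * q (θ u)) - (p (θ v) + c * q (θ v))|
              ≤ (Lp + c * Lq) * |θ u - θ v| := by
            have := abs_add_le (p (θ u) - p (θ v)) (c * (q (θ u) - q (θ v)))
            have hq2 : |c * (q (θ u) - q (θ v))| ≤ c * (Lq * |θ u - θ v|) := by
              rw [abs_mul, abs_of_nonneg hc]
              exact mul_le_mul_of_nonneg_left (hq_lipschitz _ _) hc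
            have hp2 := hp_lip (θ u) (θ v)
            calc |(p (θ u) + c * q (θ u)) - (p (θ v) + c * q (θ v))|
                = |(p (θ u) - p (θ v)) + c * (q (θ u) - q (θ v))| := by ring_nf
              _ ≤ |p (θ u) - p (θ v)| + |c * (q (θ u) - q (θ v))| := abs_add_le _ _
              _ ≤ (Lp + c * Lq) * |θ u - θ v| := by nlinarith [abs_nonneg (θ u - θ v)]
          have h3 := hθbound u v
          have h5 : 0 ≤ Lp + c * Lq := by nlinarith
          have h6 : |(p (θ u) + c * q (θ u)) - (p (θ v) + c * q (θ v))| * ‖w‖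
              ≤ ((Lp + c * Lq) * (‖w‖ * ‖u - v‖)) * ‖w‖ :=
            mul_le_mul_of_nonneg_right
              (h2.trans (mul_le_mul_of_nonneg_left h3 h5)) (norm_nonneg w)
          nlinarith [h1, h6]
  -- the sets
  have hKeq : K = {v : X | ⟪w, v⟫_ℝ ≤ 2 * l} := by
    rw [hK]; ext v; simp only [Set.mem_setOf_eq, hθ, ge_iff_le]
    constructor <;> intro h <;> linarith
  have hK'eq : K' = {v : X | ⟪w, v⟫_ℝ ≤ 0} := by
    rw [hK']; ext v; simp only [Set.mem_setOf_eq, hθ, ge_iff_le]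
    constructor <;> intro h <;> linarith
  have hlin : IsLinearMap ℝ (fun v : X => ⟪w, v⟫_ℝ) :=
    ⟨fun a b => inner_add_right _ _ _, fun r a => real_inner_smul_right _ _ _⟩
  have hcont : Continuous (fun v : X => ⟪w, v⟫_ℝ) := continuous_const.inner continuous_id
  have hKcl : IsClosed K := by rw [hKeq]; exact isClosed_le hcont continuous_const
  have hK'cl : IsClosed K' := by rw [hK'eq]; exact isClosed_le hcont continuous_const
  have hKconv : Convex ℝ K := by rw [hKeq]; exact convex_halfSpace_le hlin _
  have hK'conv : Convex ℝ K' := by rw [hK'eq]; exact convex_halfSpace_le hlin _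
  have h0K : (0:X) ∈ K := by rw [hKeq]; simp only [Set.mem_setOf_eq, inner_zero_right]; linarith
  have h0K' : (0:X) ∈ K' := by simp only [hK'eq, Set.mem_setOf_eq, inner_zero_right]; exact le_refl 0
  have hK'K : K' ⊆ K := by
    rw [hKeq, hK'eq]; intro v hv; simp only [Set.mem_setOf_eq] at *; linarith
  -- existence and uniqueness for the penalized problems
  have hexn : ∀ n : ℕ, ∃! u : X, u ∈ K ∧ ∀ v ∈ K,
      ⟪f, v - u⟫_ℝ ≤ ⟪B (1 / lam n) u, v - u⟫_ℝ := by
    intro n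
    have hcpos : (0:ℝ) ≤ 1 / lam n := (one_div_pos.mpr (hlam_pos n)).le
    exact lions_stampacchia K hKconv hKcl ⟨0, h0K⟩ (B (1 / lam n)) m'
      (M + (Lp + (1 / lam n) * Lq) * ‖w‖ ^ 2) hm' (hBmono _ hcpos) (hBlip _ hcpos) f
  have hex' : ∃! u : X, u ∈ K' ∧ ∀ v ∈ K',
      ⟪f, v - u⟫_ℝ ≤ ⟪B 0 u, v - u⟫_ℝ :=
    lions_stampacchia K' hK'conv hK'cl ⟨0, h0K'⟩ (B 0) m'
      (M + (Lp + 0 * Lq) * ‖w‖ ^ 2) hm' (hBmono _ le_rfl) (hBlip _ le_rfl) f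
  have hBrw0 : ∀ u v : X, ⟪A u, v - u⟫_ℝ + j u v - j u u = ⟪B 0 u, v - u⟫_ℝ := by
    intro u v
    have := hBrw 0 u v
    linarith
  refine ⟨?_, ?_, ?_⟩
  · intro n
    obtain ⟨u, ⟨huK, husol⟩, huniq⟩ := hexn n
    refine ⟨u, ⟨huK, fun v hv => ?_⟩, ?_⟩
    · rw [ge_iff_le, hBrw (1 / lam n) u v]; exact husol v hv
    · rintro y ⟨hyK, hysol⟩
      refine huniq y ⟨hyK, fun v hv => ?_⟩
      rw [← hBrw (1 / lam n) y v]
      exact hysol v hv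
  · obtain ⟨u, ⟨huK, husol⟩, huniq⟩ := hex'
    refine ⟨u, ⟨huK, fun v hv => ?_⟩, ?_⟩
    · rw [ge_iff_le, hBrw0 u v]; exact husol v hv
    · rintro y ⟨hyK, hysol⟩
      refine huniq y ⟨hyK, fun v hv => ?_⟩
      rw [← hBrw0 y v]
      exact hysol v hv
  · intro un u' hn hu'
    have hwne : ‖w‖ ≠ 0 := ne_of_gt hwpos
    have ht' : 2 * l ≤ θ u' := by have h := hu'.1; rw [hK'] at h; exact h
    have hwu' : ⟪w, u'⟫_ℝ ≤ 0 := by have h := hu'.1; rw [hK'eq] at h; exact h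
    have hu'K : u' ∈ K := hK'K hu'.1
    have hu'vi : ∀ v ∈ K', ⟪f, v - u'⟫_ℝ ≤ ⟪B 0 u', v - u'⟫_ℝ := fun v hv => by
      rw [← hBrw0 u' v]; exact hu'.2 v hv
    set C : ℝ := ‖f - B 0 u'‖ with hC
    have hC0 : 0 ≤ C := norm_nonneg _
    have hunvi : ∀ n, ∀ v ∈ K,
        ⟪f, v - un n⟫_ℝ ≤ ⟪B (1 / lam n) (un n), v - un n⟫_ℝ := fun n v hv => by
      rw [← hBrw (1 / lam n) (un n) v]; exact (hn n).2 v hv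
    have hBsplit : ∀ (c : ℝ) (u : X), B c u = B 0 u + (c * q (θ u)) • w := by
      intro c u; rw [hB]; simp only; module
    have hP0all : ∀ n : ℕ, 0 ≤ q (θ (un n)) * max (2 * l - θ (un n)) 0 := by
      intro n
      rcases le_or_gt (2 * l) (θ (un n)) with h2l | h2l
      · rw [(hq_zero _).mpr h2l]; ring_nf; exact le_refl 0
      · exact mul_nonneg (hq_nonneg _ h2l.le) (le_max_right _ _)
    have hemax : ∀ n : ℕ, max (2 * l - θ (un n)) 0 ≤ ‖w‖ * ‖un n - u'‖ := by
      intro n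
      apply max_le
      · have h2 : ⟪w, un n⟫_ℝ = 2 * l - θ (un n) := by rw [hθ]; ring
        have h4 : ⟪w, un n - u'⟫_ℝ ≤ ‖w‖ * ‖un n - u'‖ := real_inner_le_norm _ _
        rw [inner_sub_right] at h4
        linarith
      · positivity
    -- master estimate
    have master : ∀ n : ℕ,
        m' * ‖un n - u'‖ ^ 2 * ‖w‖
          + (1 / lam n) * (q (θ (un n)) * max (2 * l - θ (un n)) 0) * ‖w‖
        ≤ C * max (2 * l - θ (un n)) 0 := by
      intro n
      set x := un n with hx
      set tn := θ (un n) with htn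
      set en := max (2 * l - tn) 0 with hen
      have hen0 : (0:ℝ) ≤ en := le_max_right _ _
      set sn := en / ‖w‖ ^ 2 with hsn
      have hsn0 : 0 ≤ sn := by positivity
      have hsnw : sn * ‖w‖ ^ 2 = en := by rw [hsn]; field_simp
      set zn := x - sn • w with hzn
      have hznK' : zn ∈ K' := by
        rw [hK'eq]
        simp only [Set.mem_setOf_eq, hzn, inner_sub_right, real_inner_smul_right,
          real_inner_self_eq_norm_sq]
        have h2 : ⟪w, x⟫_ℝ = 2 * l - tn := by rw [htn, hx, hθ]; ring
        have h3 := le_max_left (2 * l - tn) 0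
        rw [h2]
        have hsq : sn * ‖w‖ ^ 2 = en := hsnw
        nlinarith [hsq]
      have hT1 : (1 / lam n) * (q tn * en) ≤ ⟪B 0 x, u' - x⟫_ℝ - ⟪f, u' - x⟫_ℝ := by
        have h := hunvi n u' hu'K
        rw [hBsplit (1 / lam n) x, inner_add_left, real_inner_smul_left, hwinner x u'] at h
        have hq1 : q tn * (tn - θ u') ≤ -(q tn * en) := by
          rcases le_or_gt (2 * l) tn with h2l | h2l
          · rw [(hq_zero _).mpr h2l]; ring_nf; exact le_refl 0
          · have hqn : 0 ≤ q tn := hq_nonneg tn h2l.le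
            have henval : en = 2 * l - tn := max_eq_left (by linarith)
            rw [henval]
            nlinarith
        have hc : 0 < 1 / lam n := one_div_pos.mpr (hlam_pos n)
        nlinarith [mul_le_mul_of_nonneg_left hq1 hc.le]
      have hT2 : 0 ≤ ⟪B 0 u', zn - u'⟫_ℝ - ⟪f, zn - u'⟫_ℝ := by
        have := hu'vi zn hznK'; linarith
      have hT3 : ⟪f - B 0 u', x - zn⟫_ℝ * ‖w‖ ≤ C * en := by
        have hxz : x - zn = sn • w := by rw [hzn]; abel
        rw [hxz, real_inner_smul_right]
        have hcs : ⟪f - B 0 u', w⟫_ℝ ≤ C * ‖w‖ := real_inner_le_norm _ _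
        calc sn * ⟪f - B 0 u', w⟫_ℝ * ‖w‖
            ≤ sn * (C * ‖w‖) * ‖w‖ := by
              have := mul_le_mul_of_nonneg_left hcs hsn0
              nlinarith [norm_nonneg w]
          _ = C * (sn * ‖w‖ ^ 2) := by ring
          _ = C * en := by rw [hsnw]
      have hiden : ⟪B 0 x - B 0 u', x - u'⟫_ℝ
          = -(⟪B 0 x, u' - x⟫_ℝ - ⟪f, u' - x⟫_ℝ)
            - (⟪B 0 u', zn - u'⟫_ℝ - ⟪f, zn - u'⟫_ℝ)
            + ⟪f - B 0 u', x - zn⟫_ℝ := by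
        simp only [inner_sub_left, inner_sub_right]; ring
      have hmono0 := hBmono 0 le_rfl x u'
      have hwnn : (0:ℝ) ≤ ‖w‖ := norm_nonneg w
      have e1 := mul_le_mul_of_nonneg_right hT1 hwnn
      have e2 := mul_le_mul_of_nonneg_right hT2 hwnn
      have e4 := mul_le_mul_of_nonneg_right hmono0 hwnn
      have e5 : ⟪B 0 x - B 0 u', x - u'⟫_ℝ * ‖w‖
          = (-(⟪B 0 x, u' - x⟫_ℝ - ⟪f, u' - x⟫_ℝ)
            - (⟪B 0 u', zn - u'⟫_ℝ - ⟪f, zn - u'⟫_ℝ)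
            + ⟪f - B 0 u', x - zn⟫_ℝ) * ‖w‖ := by rw [hiden]
      rw [e5] at e4
      ring_nf at e1 e2 e4 hT3 ⊢
      linarith [e1, e2, e4, hT3]
    -- uniform bound
    have hRbound : ∀ n : ℕ, ‖un n - u'‖ ≤ C / m' := by
      intro n
      have h := master n
      have he := hemax n
      have hP0 := hP0all n
      have hc : 0 ≤ 1 / lam n := (one_div_pos.mpr (hlam_pos n)).le
      have h5 : m' * ‖un n - u'‖ ^ 2 * ‖w‖ ≤ (C * ‖un n - u'‖) * ‖w‖ := by
        have h2 := mul_le_mul_of_nonneg_left he hC0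
        have h3 := mul_nonneg (mul_nonneg hc hP0) (norm_nonneg w)
        ring_nf at h h2 h3 ⊢
        linarith
      have h6 : m' * ‖un n - u'‖ ^ 2 ≤ C * ‖un n - u'‖ := by
        have h5' : (m' * ‖un n - u'‖ ^ 2) * ‖w‖ ≤ (C * ‖un n - u'‖) * ‖w‖ := by linarith
        exact le_of_mul_le_mul_right h5' hwpos
      rcases eq_or_lt_of_le (norm_nonneg (un n - u')) with h0 | h0
      · rw [← h0]; positivity
      · rw [le_div_iff₀ hm']
        have h7 : (m' * ‖un n - u'‖) * ‖un n - u'‖ ≤ C * ‖un n - u'‖ := by nlinarith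
        have := le_of_mul_le_mul_right h7 h0
        linarith
    -- penalty bound
    have hPbound : ∀ n : ℕ,
        q (θ (un n)) * max (2 * l - θ (un n)) 0 ≤ lam n * (C * (C / m')) := by
      intro n
      have h := master n
      have he := hemax n
      have hR := hRbound n
      have hsq : 0 ≤ m' * ‖un n - u'‖ ^ 2 * ‖w‖ := by positivity
      have h1 : (1 / lam n) * (q (θ (un n)) * max (2 * l - θ (un n)) 0) * ‖w‖
          ≤ (C * (C / m')) * ‖w‖ := by
        have h2 := mul_le_mul_of_nonneg_left he hC0
        have h3 : C * (‖w‖ * ‖un n - u'‖) ≤ C * (‖w‖ * (C / m')) :=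
          mul_le_mul_of_nonneg_left (mul_le_mul_of_nonneg_left hR (norm_nonneg w)) hC0
        ring_nf at h h2 h3 hsq ⊢
        linarith
      have h4 : (1 / lam n) * (q (θ (un n)) * max (2 * l - θ (un n)) 0) ≤ C * (C / m') :=
        le_of_mul_le_mul_right h1 hwpos
      have h6 : q (θ (un n)) * max (2 * l - θ (un n)) 0
          = lam n * ((1 / lam n) * (q (θ (un n)) * max (2 * l - θ (un n)) 0)) := by
        field_simp
        exact (mul_div_cancel_right₀ _ (hlam_pos n).ne').symm
      rw [h6]
      exact mul_le_mul_of_nonneg_left h4 (hlam_pos n).le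
    -- final ε-argument
    rw [Metric.tendsto_atTop]
    intro ε' hε'
    set E := m' * ‖w‖ * ε' ^ 2 with hE
    have hEpos : 0 < E := by positivity
    set ε := min l (E / (2 * (C + 1))) with hεdef
    have hεpos : 0 < ε := lt_min hl (by positivity)
    have hq2l : 0 < q (2 * l - ε) := by
      have h1 : 2 * l - ε ≤ 2 * l := by linarith
      rcases eq_or_lt_of_le (hq_nonneg _ h1) with h3 | h3
      · exfalso; have := (hq_zero _).mp h3.symm; linarith
      · exact h3
    set D := C * (C / m') with hD
    have hD0 : 0 ≤ D := by positivity
    set δ := q (2 * l - ε) * ε / (D + 1) with hδdef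
    have hδpos : 0 < δ := by positivity
    obtain ⟨N, hN⟩ := (Metric.tendsto_atTop.mp hlam_lim) δ hδpos
    refine ⟨N, fun n hn' => ?_⟩
    have hlamlt : lam n < δ := by
      have := hN n hn'
      rw [Real.dist_eq, sub_zero, abs_of_pos (hlam_pos n)] at this
      exact this
    have htnlt : 2 * l - θ (un n) < ε := by
      by_contra hcon
      push_neg at hcon
      have htle : θ (un n) ≤ 2 * l - ε := by linarith
      have hqge : q (2 * l - ε) ≤ q (θ (un n)) := by
        rcases eq_or_lt_of_le htle with he | ht
        · rw [he]
        · have hmm := hq_mono (θ (un n)) (2 * l - ε)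
          nlinarith
      have henge : ε ≤ max (2 * l - θ (un n)) 0 := le_trans hcon (le_max_left _ _)
      have hPge : q (2 * l - ε) * ε ≤ q (θ (un n)) * max (2 * l - θ (un n)) 0 :=
        mul_le_mul hqge henge hεpos.le (le_trans hq2l.le hqge)
      have hPb := hPbound n
      have hlt : lam n * D < δ * (D + 1) := by
        have h8 := mul_le_mul_of_nonneg_right hlamlt.le hD0
        nlinarith [hδpos]
      have hδD : δ * (D + 1) = q (2 * l - ε) * ε := by
        rw [hδdef]; field_simp
      linarith
    have hele : max (2 * l - θ (un n)) 0 ≤ ε := max_le htnlt.le hεpos.le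
    have h := master n
    have hc : 0 ≤ 1 / lam n := (one_div_pos.mpr (hlam_pos n)).le
    have h5 : m' * ‖un n - u'‖ ^ 2 * ‖w‖ ≤ C * ε := by
      have h2 := mul_le_mul_of_nonneg_left hele hC0
      have h3 := mul_nonneg (mul_nonneg hc (hP0all n)) (norm_nonneg w)
      ring_nf at h h2 h3 ⊢
      linarith
    have hεle : ε ≤ E / (2 * (C + 1)) := min_le_right _ _
    have h9 : C * (E / (2 * (C + 1))) ≤ E / 2 := by
      rw [← mul_div_assoc, div_le_div_iff₀ (by positivity) (by norm_num : (0:ℝ) < 2)]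
      nlinarith [hEpos.le, hC0]
    have h10 : C * ε ≤ E / 2 := le_trans (mul_le_mul_of_nonneg_left hεle hC0) h9
    have h11 : (m' * ‖w‖) * ‖un n - u'‖ ^ 2 ≤ (m' * ‖w‖) * (ε' ^ 2 / 2) := by
      have hE2 : E / 2 = (m' * ‖w‖) * (ε' ^ 2 / 2) := by rw [hE]; ring
      ring_nf at h5 h10 hE2 ⊢
      linarith
    have h12 : ‖un n - u'‖ ^ 2 ≤ ε' ^ 2 / 2 := le_of_mul_le_mul_left h11 (by positivity)
    have h13 : ‖un n - u'‖ ^ 2 < ε' ^ 2 := by nlinarith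
    rw [dist_eq_norm]
    exact lt_of_pow_lt_pow_left₀ 2 hε'.le h13
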